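/- (Reindexing Lemma) For a partition λ with ℓ = ℓ(λ), define κ^(λ)(m) = Π_{i=1}^{ℓ} (m − m_i(λ)) where m_i(λ) = λ_i − i, and γ^(λ)_k(m) = Π_{j ∈ G^(λ)_k} (m − j) with G^(λ)_k = (M^(λ)+k) ∩ (ℤ \ M^(λ)). Let F_k(x) = Γ(x+1)/Γ(x−k+1) denote the generalized falling factorial. Then κ^(λ)(m) γ^(λ)_k(m) = κ^(λ)(m−k) γ^(λ)_{−k}(m−k) F_k(m+ℓ) as an identity of rational functions of m, for every integer k. -/

import Mathlib

/-- A partition, as a 1-indexed weakly decreasing sequence of non-negative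
integers with finitely many nonzero parts (index 0 is unused and set to 0). -/
def IsPartition (lam : ℕ → ℕ) : Prop :=
  lam 0 = 0 ∧ (∀ i, 1 ≤ i → lam (i + 1) ≤ lam i) ∧ ∃ n, ∀ i, n ≤ i → lam i = 0

/-- The length `ℓ(λ)`: the number of nonzero parts. -/
noncomputable def plen (lam : ℕ → ℕ) : ℕ := Set.ncard {i : ℕ | lam i ≠ 0}

/-- The Maya diagram `M^(λ) = {λ_i - i : i ≥ 1}`. -/
def Maya (lam : ℕ → ℕ) : Set ℤ := {z | ∃ i : ℕ, 1 ≤ i ∧ z = (lam i : ℤ) - i}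

/-- The generalized falling factorial `F_k(x) = Γ(x+1)/Γ(x-k+1)`:
`F_k(x) = x(x-1)⋯(x-k+1)` for `k ≥ 0`, and
`F_k(x) = ((x+1)(x+2)⋯(x-k))⁻¹` for `k ≤ -1`. -/
noncomputable def Ffall (k : ℤ) (x : ℝ) : ℝ :=
  if 0 ≤ k then ∏ i ∈ Finset.range k.toNat, (x - i)
  else (∏ i ∈ Finset.range (-k).toNat, (x + 1 + i))⁻¹

/-- A downward-closed (above 1) finset of naturals is an initial interval. -/
lemma downclosed_eq_Icc (T : Finset ℕ) (h0 : 0 ∉ T)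
    (hdc : ∀ j ∈ T, ∀ i, 1 ≤ i → i ≤ j → i ∈ T) : T = Finset.Icc 1 T.card := by
  rcases T.eq_empty_or_nonempty with rfl | hne
  · simp
  · obtain ⟨N, hNmem, hNmax⟩ : ∃ N, N ∈ T ∧ ∀ i ∈ T, i ≤ N :=
      ⟨T.max' hne, T.max'_mem hne, fun i hi => T.le_max' i hi⟩
    have hTeq : T = Finset.Icc 1 N := by
      ext i
      simp only [Finset.mem_Icc]
      constructor
      · intro hi
        refine ⟨?_, hNmax i hi⟩
        rcases Nat.eq_zero_or_pos i with rfl | h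
        · exact absurd hi h0
        · exact h
      · rintro ⟨h1, h2⟩
        exact hdc _ hNmem i h1 h2
    rw [hTeq]
    simp

theorem stmt16 (lam : ℕ → ℕ) (hp : IsPartition lam) (k : ℤ)
    (Gk Gmk : Finset ℤ)
    (hGk : (Gk : Set ℤ) = ((fun z => z + k) '' Maya lam) ∩ (Maya lam)ᶜ)
    (hGmk : (Gmk : Set ℤ) = ((fun z => z + (-k)) '' Maya lam) ∩ (Maya lam)ᶜ)
    (m : ℝ)
    (hden : ∀ i ∈ Finset.range (-k).toNat, m + (plen lam : ℝ) + 1 + (i : ℝ) ≠ 0) :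
    (∏ i ∈ Finset.Icc 1 (plen lam), (m - ((lam i : ℝ) - i))) * (∏ j ∈ Gk, (m - (j : ℝ))) =
      (∏ i ∈ Finset.Icc 1 (plen lam), ((m - k) - ((lam i : ℝ) - i)))
        * (∏ j ∈ Gmk, ((m - k) - (j : ℝ))) * Ffall k (m + plen lam) := by
  classical
  obtain ⟨h0, hdec, n, hn⟩ := hp
  set L : ℕ := plen lam with hLdef
  -- monotonicity of lam on [1, ∞)
  have hmono : ∀ i j : ℕ, 1 ≤ i → i ≤ j → lam j ≤ lam i := by
    intro i j hi hij
    induction j with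
    | zero => omega
    | succ j ih =>
      rcases Nat.eq_or_lt_of_le hij with h | h
      · subst h; exact le_rfl
      · have hij' : i ≤ j := by omega
        have h1 : lam (j + 1) ≤ lam j := hdec j (by omega)
        exact le_trans h1 (ih hij')
  -- the set of nonzero parts as a finset
  set T : Finset ℕ := (Finset.range n).filter (fun i => lam i ≠ 0) with hT
  have hTmem : ∀ i, i ∈ T ↔ lam i ≠ 0 := by
    intro i
    simp only [hT, Finset.mem_filter, Finset.mem_range, and_iff_right_iff_imp]
    intro h
    by_contra h'
    exact h (hn i (le_of_not_gt h'))
  have hLT : L = T.card := by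
    have : {i : ℕ | lam i ≠ 0} = ↑T := by
      ext i; simp [hTmem]
    rw [hLdef, plen, this, Set.ncard_coe_finset]
  have hTIcc : T = Finset.Icc 1 L := by
    rw [hLT]
    apply downclosed_eq_Icc
    · simp [hTmem, h0]
    · intro j hj i h1 hij
      rw [hTmem] at hj ⊢
      intro h
      have := hmono i j h1 hij
      omega
  -- basic facts about lam
  have hlo : ∀ i : ℕ, 1 ≤ i → i ≤ L → 1 ≤ lam i := by
    intro i h1 h2
    have : i ∈ T := by rw [hTIcc]; simp [h1, h2]
    rw [hTmem] at this; omega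
  have hup : ∀ i : ℕ, L < i → lam i = 0 := by
    intro i hi
    by_contra h
    have : i ∈ T := (hTmem i).2 h
    rw [hTIcc, Finset.mem_Icc] at this
    omega
  -- Maya facts
  have hMlow : ∀ j : ℤ, j < -(L : ℤ) → j ∈ Maya lam := by
    intro j hj
    refine ⟨(-j).toNat, by omega, ?_⟩
    have h1 : L < (-j).toNat := by omega
    rw [hup _ h1]
    omega
  -- the finsets
  set A : Finset ℤ := (Finset.Icc 1 L).image (fun i => (lam i : ℤ) - i) with hAdef
  set B : Finset ℤ := A.image (fun j => j + k) with hBdef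
  set H : Finset ℤ := Gmk.image (fun j => j + k) with hHdef
  set Cp : Finset ℤ := Finset.Ico (-(L : ℤ)) (k - L) with hCpdef
  set Cm : Finset ℤ := Finset.Ico (k - (L : ℤ)) (-(L : ℤ)) with hCmdef
  -- characterizations
  have hAmem : ∀ j : ℤ, j ∈ A ↔ (j ∈ Maya lam ∧ -(L : ℤ) ≤ j) := by
    intro j
    simp only [hAdef, Finset.mem_image, Finset.mem_Icc]
    constructor
    · rintro ⟨i, ⟨h1, h2⟩, rfl⟩
      have := hlo i h1 h2
      exact ⟨⟨i, h1, rfl⟩, by omega⟩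
    · rintro ⟨⟨i, h1, rfl⟩, h2⟩
      refine ⟨i, ⟨h1, ?_⟩, rfl⟩
      by_contra h
      have := hup i (by omega)
      omega
  have hGkmem : ∀ j : ℤ, j ∈ Gk ↔ (j - k ∈ Maya lam ∧ j ∉ Maya lam) := by
    intro j
    have := Set.ext_iff.1 hGk j
    simp only [Finset.mem_coe, Set.mem_inter_iff, Set.mem_image, Set.mem_compl_iff] at this
    rw [this]
    constructor
    · rintro ⟨⟨z, hz, rfl⟩, h2⟩; exact ⟨by simpa using hz, h2⟩
    · rintro ⟨h1, h2⟩; exact ⟨⟨j - k, h1, by ring⟩, h2⟩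
  have hGmkmem : ∀ j : ℤ, j ∈ Gmk ↔ (j + k ∈ Maya lam ∧ j ∉ Maya lam) := by
    intro j
    have := Set.ext_iff.1 hGmk j
    simp only [Finset.mem_coe, Set.mem_inter_iff, Set.mem_image, Set.mem_compl_iff] at this
    rw [this]
    constructor
    · rintro ⟨⟨z, hz, rfl⟩, h2⟩; exact ⟨by simpa using hz, h2⟩
    · rintro ⟨h1, h2⟩; exact ⟨⟨j + k, h1, by ring⟩, h2⟩
  have hBmem : ∀ j : ℤ, j ∈ B ↔ (j - k ∈ Maya lam ∧ k - (L : ℤ) ≤ j) := by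
    intro j
    simp only [hBdef, Finset.mem_image]
    constructor
    · rintro ⟨z, hz, rfl⟩
      rw [hAmem] at hz
      exact ⟨by simpa using hz.1, by omega⟩
    · rintro ⟨h1, h2⟩
      exact ⟨j - k, (hAmem _).2 ⟨h1, by omega⟩, by ring⟩
  have hHmem : ∀ j : ℤ, j ∈ H ↔ (j ∈ Maya lam ∧ j - k ∉ Maya lam) := by
    intro j
    simp only [hHdef, Finset.mem_image]
    constructor
    · rintro ⟨z, hz, rfl⟩
      rw [hGmkmem] at hz
      exact ⟨hz.1, by simpa using hz.2⟩
    · rintro ⟨h1, h2⟩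
      exact ⟨j - k, (hGmkmem _).2 ⟨by simpa using h1, h2⟩, by ring⟩
  -- the key finset identity
  have hkey : A ∪ Gk ∪ Cm = B ∪ H ∪ Cp := by
    ext j
    simp only [Finset.mem_union, hAmem j, hGkmem j, hBmem j, hHmem j, hCpdef, hCmdef,
      Finset.mem_Ico]
    have f1 : j ∉ Maya lam → -(L : ℤ) ≤ j := fun h =>
      le_of_not_gt fun hlt => h (hMlow j hlt)
    have f2 : j - k ∉ Maya lam → -(L : ℤ) ≤ j - k := fun h =>
      le_of_not_gt fun hlt => h (hMlow (j - k) hlt)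
    by_cases hP : j ∈ Maya lam <;> by_cases hQ : j - k ∈ Maya lam <;>
      simp only [hP, hQ, not_true, not_false_iff, true_and, and_true, false_and, and_false,
        false_or, or_false, true_or, iff_true, true_iff] <;>
      first
      | omega
      | (have := f1 hP; omega)
      | (have := f2 hQ; omega)
      | (have := f1 hP; have := f2 hQ; omega)
  -- disjointness
  have dAGk : Disjoint A Gk := by
    rw [Finset.disjoint_left]
    intro j hj hj'
    exact ((hGkmem j).1 hj').2 ((hAmem j).1 hj).1
  have dACm : Disjoint (A ∪ Gk) Cm := by
    rw [Finset.disjoint_left]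
    intro j hj hj'
    rw [hCmdef, Finset.mem_Ico] at hj'
    rcases Finset.mem_union.1 hj with h | h
    · have := ((hAmem j).1 h).2; omega
    · exact ((hGkmem j).1 h).2 (hMlow j (by omega))
  have dBH : Disjoint B H := by
    rw [Finset.disjoint_left]
    intro j hj hj'
    exact ((hHmem j).1 hj').2 ((hBmem j).1 hj).1
  have dBCp : Disjoint (B ∪ H) Cp := by
    rw [Finset.disjoint_left]
    intro j hj hj'
    rw [hCpdef, Finset.mem_Ico] at hj'
    rcases Finset.mem_union.1 hj with h | h
    · have := ((hBmem j).1 h).2; omega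
    · exact ((hHmem j).1 h).2 (hMlow (j - k) (by omega))
  -- central product identity over ℝ
  have hprod : (∏ j ∈ A ∪ Gk ∪ Cm, (m - (j : ℝ))) = ∏ j ∈ B ∪ H ∪ Cp, (m - (j : ℝ)) := by
    rw [hkey]
  rw [Finset.prod_union dACm, Finset.prod_union dAGk, Finset.prod_union dBCp,
    Finset.prod_union dBH] at hprod
  -- injectivity of i ↦ lam i - i on Icc 1 L
  have hinj : ∀ x ∈ Finset.Icc 1 L, ∀ y ∈ Finset.Icc 1 L,
      (lam x : ℤ) - x = (lam y : ℤ) - y → x = y := by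
    intro x hx y hy h
    rw [Finset.mem_Icc] at hx hy
    by_contra hne
    rcases Nat.lt_or_ge x y with hlt | hge
    · have := hmono x y hx.1 (le_of_lt hlt); omega
    · have hlt : y < x := by omega
      have := hmono y x hy.1 (le_of_lt hlt); omega
  -- rewrite the kappa products over A and B
  have hκ1 : (∏ i ∈ Finset.Icc 1 L, (m - ((lam i : ℝ) - i))) = ∏ j ∈ A, (m - (j : ℝ)) := by
    rw [hAdef, Finset.prod_image hinj]
    apply Finset.prod_congr rfl
    intro i _
    push_cast
    ring
  have hκ2 : (∏ i ∈ Finset.Icc 1 L, ((m - k) - ((lam i : ℝ) - i)))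
      = ∏ j ∈ B, (m - (j : ℝ)) := by
    rw [hBdef, Finset.prod_image (fun x _ y _ h => by omega), Finset.prod_image hinj]
    apply Finset.prod_congr rfl
    intro i _
    push_cast
    ring
  have hγ : (∏ j ∈ Gmk, ((m - k) - (j : ℝ))) = ∏ j ∈ H, (m - (j : ℝ)) := by
    rw [hHdef, Finset.prod_image (fun x _ y _ h => by omega)]
    apply Finset.prod_congr rfl
    intro j _
    push_cast
    ring
  rw [hκ1, hκ2, hγ]
  -- split on the sign of k
  rcases le_or_gt 0 k with hk | hk
  · -- k ≥ 0 : Cm is empty, Ffall = ∏ over Cp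
    have hCm0 : Cm = ∅ := by
      rw [hCmdef]; apply Finset.Ico_eq_empty; omega
    have hFf : Ffall k (m + L) = ∏ j ∈ Cp, (m - (j : ℝ)) := by
      rw [Ffall, if_pos hk]
      have hCpim : Cp = (Finset.range k.toNat).image (fun i : ℕ => (i : ℤ) - (L : ℤ)) := by
        ext j
        simp only [hCpdef, Finset.mem_Ico, Finset.mem_image, Finset.mem_range]
        constructor
        · intro h; exact ⟨(j + L).toNat, by omega, by omega⟩
        · rintro ⟨i, hi, rfl⟩; omega
      rw [hCpim, Finset.prod_image (fun x _ y _ h => by omega)]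
      apply Finset.prod_congr rfl
      intro i _
      push_cast
      ring
    rw [hCm0, Finset.prod_empty, mul_one] at hprod
    rw [hFf]
    exact hprod
  · -- k < 0 : Cp is empty, Ffall = (∏ over Cm)⁻¹
    have hCp0 : Cp = ∅ := by
      rw [hCpdef]; apply Finset.Ico_eq_empty; omega
    have hCmim : Cm = (Finset.range (-k).toNat).image (fun i : ℕ => -(L : ℤ) - 1 - (i : ℤ)) := by
      ext j
      simp only [hCmdef, Finset.mem_Ico, Finset.mem_image, Finset.mem_range]
      constructor
      · intro h; exact ⟨(-(L:ℤ) - 1 - j).toNat, by omega, by omega⟩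
      · rintro ⟨i, hi, rfl⟩; omega
    have hFf : Ffall k (m + L) = (∏ j ∈ Cm, (m - (j : ℝ)))⁻¹ := by
      rw [Ffall, if_neg (by omega)]
      congr 1
      rw [hCmim, Finset.prod_image (fun x _ y _ h => by omega)]
      apply Finset.prod_congr rfl
      intro i _
      push_cast
      ring
    have hCmne : (∏ j ∈ Cm, (m - (j : ℝ))) ≠ 0 := by
      rw [hCmim, Finset.prod_image (fun x _ y _ h => by omega)]
      apply Finset.prod_ne_zero_iff.2
      intro i hi
      have := hden i hi
      intro h
      apply this
      push_cast at h ⊢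
      linarith
    rw [hCp0, Finset.prod_empty, mul_one] at hprod
    rw [hFf, ← hprod, mul_assoc, mul_inv_cancel₀ hCmne, mul_one]
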